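/- Let A, B, Ã be n×n real symmetric matrices with λ_min(A) = 0, λ₂(A) > 0, and B positive semidefinite. Let x₀ satisfy A x₀ = 0 and B x₀ ≠ 0. Suppose the function f(x) = (xᵀ(A+Ã)x)/(xᵀBx), defined on {x : xᵀBx > 0}, attains its minimum at a point x₊. Then sin²∠(x₊, x₀) ≤ (‖Ã‖/λ₂(A)) · (1 + (‖x₀‖²/(x₀ᵀBx₀)) · (x₊ᵀBx₊/‖x₊‖²)). -/

import Mathlib

noncomputable section
open Matrix

/-- Spectral (operator 2-) norm of a real matrix. -/
noncomputable def specNorm {m n : ℕ} (M : Matrix (Fin m) (Fin n) ℝ) : ℝ :=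
  ‖LinearMap.toContinuousLinearMap (Matrix.toEuclideanLin M)‖

/-- Eigenvalues of a Hermitian matrix, sorted in ascending order. -/
noncomputable def sortedEig {n : ℕ} {M : Matrix (Fin n) (Fin n) ℝ} (hM : M.IsHermitian) :
    Fin n → ℝ :=
  hM.eigenvalues ∘ Tuple.sort hM.eigenvalues

lemma euclid_dot {n : ℕ} (x y : EuclideanSpace ℝ (Fin n)) :
    (inner ℝ x y : ℝ) = (⇑x : Fin n → ℝ) ⬝ᵥ ⇑y := by
  rw [EuclideanSpace.inner_eq_star_dotProduct]
  simp [dotProduct, star, mul_comm]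

lemma dot_sum' {n : ℕ} (v : Fin n → ℝ) (w : Fin n → Fin n → ℝ) :
    v ⬝ᵥ (∑ i, w i) = ∑ i, v ⬝ᵥ w i := by
  simp only [dotProduct, Finset.sum_apply, Finset.mul_sum]
  exact Finset.sum_comm

/-- Coefficient of `v` along the `i`-th eigenvector. -/
noncomputable def eigCoef {n : ℕ} {A : Matrix (Fin n) (Fin n) ℝ} (hA : A.IsHermitian)
    (v : Fin n → ℝ) (i : Fin n) : ℝ :=
  (⇑(hA.eigenvectorBasis i) : Fin n → ℝ) ⬝ᵥ v

lemma quad_decomp {n : ℕ} (A : Matrix (Fin n) (Fin n) ℝ) (hA : A.IsHermitian) (v : Fin n → ℝ) :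
    v ⬝ᵥ A.mulVec v = ∑ i, hA.eigenvalues i * (eigCoef hA v i) ^ 2 ∧
    v ⬝ᵥ v = ∑ i, (eigCoef hA v i) ^ 2 ∧
    v = ∑ i, (eigCoef hA v i) • (⇑(hA.eigenvectorBasis i) : Fin n → ℝ) := by
  set b := hA.eigenvectorBasis with hb
  set u : Fin n → (Fin n → ℝ) := fun i => ⇑(b i) with hu
  have hcd : ∀ i, eigCoef hA v i = u i ⬝ᵥ v := fun i => rfl
  set c : Fin n → ℝ := fun i => u i ⬝ᵥ v with hc
  have h2 : ∀ i, (inner ℝ (b i) (WithLp.toLp 2 v : EuclideanSpace ℝ (Fin n)) : ℝ) = c i := fun i => euclid_dot _ _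
  have hv : v = ∑ i, c i • u i := by
    have h := b.sum_repr' (WithLp.toLp 2 v : EuclideanSpace ℝ (Fin n))
    simp_rw [h2] at h
    have h' := congrArg WithLp.ofLp h
    simpa [WithLp.ofLp_sum, WithLp.ofLp_smul, u] using h'.symm
  have hAu : ∀ i, A.mulVec (u i) = hA.eigenvalues i • u i := fun i => hA.mulVec_eigenvectorBasis i
  have hAv : A.mulVec v = ∑ i, (c i * hA.eigenvalues i) • u i := by
    conv_lhs => rw [hv, ← Matrix.mulVecLin_apply, map_sum]
    congr 1; ext i
    rw [_root_.map_smul, Matrix.mulVecLin_apply, hAu i, smul_smul]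
  have hvu : ∀ i, v ⬝ᵥ u i = c i := fun i => dotProduct_comm v (u i)
  refine ⟨?_, ?_, ?_⟩
  · rw [hAv, dot_sum']
    congr 1; ext i
    rw [dotProduct_smul, smul_eq_mul, hvu i, hcd]; ring
  · conv_lhs => rw [show v ⬝ᵥ v = v ⬝ᵥ (∑ i, c i • u i) from by rw [← hv]]
    rw [dot_sum']
    congr 1; ext i
    rw [dotProduct_smul, smul_eq_mul, hvu i, hcd]; ring
  · conv_lhs => rw [hv]
    rfl

lemma gap_lemma {n : ℕ} (hn : 2 ≤ n) (A : Matrix (Fin n) (Fin n) ℝ) (hA : A.IsHermitian)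
    (hmin : sortedEig hA ⟨0, by linarith⟩ = 0) (hpos : 0 < sortedEig hA ⟨1, by linarith⟩)
    (x₀ : Fin n → ℝ) (hx₀ : x₀ ≠ 0) (hx₀A : A.mulVec x₀ = 0) (v : Fin n → ℝ) :
    sortedEig hA ⟨1, by linarith⟩ * (v ⬝ᵥ v - (v ⬝ᵥ x₀) ^ 2 / (x₀ ⬝ᵥ x₀)) ≤ v ⬝ᵥ A.mulVec v := by
  set σ := Tuple.sort hA.eigenvalues with hσ
  have hg : Monotone (hA.eigenvalues ∘ σ) := Tuple.monotone_sort hA.eigenvalues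
  set lam2 := sortedEig hA ⟨1, by omega⟩ with hlam2
  set j₀ : Fin n := σ ⟨0, by omega⟩ with hj₀
  have heig0 : hA.eigenvalues j₀ = 0 := hmin
  have hnonneg : ∀ i, 0 ≤ hA.eigenvalues i := by
    intro i
    have h : hA.eigenvalues i = (hA.eigenvalues ∘ σ) (σ.symm i) := by simp
    rw [h, ← hmin]
    exact hg (by simp [Fin.le_def])
  have hge : ∀ i, i ≠ j₀ → lam2 ≤ hA.eigenvalues i := by
    intro i hi
    have h1 : σ.symm i ≠ ⟨0, by omega⟩ := by
      intro h; apply hi; rw [hj₀, ← h]; simp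
    have h2 : (⟨1, by omega⟩ : Fin n) ≤ σ.symm i := by
      rw [Fin.le_def]
      have := Fin.val_ne_of_ne h1
      simp at this ⊢
      omega
    have h : hA.eigenvalues i = (hA.eigenvalues ∘ σ) (σ.symm i) := by simp
    rw [h]
    exact hg h2
  set c : Fin n → ℝ := eigCoef hA x₀ with hc
  set d : Fin n → ℝ := eigCoef hA v with hd
  obtain ⟨hq0, hn0, hx0e⟩ := quad_decomp A hA x₀
  obtain ⟨hqv, hnv, -⟩ := quad_decomp A hA v
  rw [← hc] at hq0 hn0 hx0e
  rw [← hd] at hqv hnv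
  have hzero : ∀ i, i ≠ j₀ → c i = 0 := by
    intro i hi
    have hsum : ∑ k, hA.eigenvalues k * c k ^ 2 = 0 := by
      rw [← hq0, hx₀A, dotProduct_zero]
    have hterm : ∀ k ∈ Finset.univ, 0 ≤ hA.eigenvalues k * c k ^ 2 := fun k _ =>
      mul_nonneg (hnonneg k) (sq_nonneg _)
    have h3 := (Finset.sum_eq_zero_iff_of_nonneg hterm).1 hsum i (Finset.mem_univ i)
    have hpi : 0 < hA.eigenvalues i := lt_of_lt_of_le hpos (hge i hi)
    rcases mul_eq_zero.mp h3 with h | h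
    · exact absurd h hpi.ne'
    · exact pow_eq_zero_iff two_ne_zero |>.mp h
  have hcj : c j₀ ≠ 0 := by
    intro h
    apply hx₀
    have hx0n : x₀ ⬝ᵥ x₀ = 0 := by
      rw [hn0]
      apply Finset.sum_eq_zero
      intro i _
      by_cases hi : i = j₀
      · rw [hi, h]; ring
      · rw [hzero i hi]; ring
    ext i
    have hz := dotProduct_self_eq_zero.mp hx0n
    simp [hz]
  have hx₀eq : x₀ = c j₀ • (⇑(hA.eigenvectorBasis j₀) : Fin n → ℝ) := by
    rw [hx0e, Finset.sum_eq_single j₀]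
    · intro i _ hi; rw [hzero i hi, zero_smul]
    · intro h; exact absurd (Finset.mem_univ j₀) h
  have hvx : v ⬝ᵥ x₀ = c j₀ * d j₀ := by
    rw [hx₀eq, dotProduct_smul, smul_eq_mul, dotProduct_comm]
    rfl
  have hxx : x₀ ⬝ᵥ x₀ = c j₀ ^ 2 := by
    rw [hn0, Finset.sum_eq_single j₀]
    · intro i _ hi; rw [hzero i hi]; ring
    · intro h; exact absurd (Finset.mem_univ j₀) h
  have hratio : (v ⬝ᵥ x₀) ^ 2 / (x₀ ⬝ᵥ x₀) = d j₀ ^ 2 := by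
    rw [hvx, hxx]
    rw [mul_pow, mul_comm, mul_div_assoc, div_self (pow_ne_zero 2 hcj), mul_one]
  rw [hratio, hqv, hnv]
  have hsplit : ∀ (f : Fin n → ℝ), ∑ i, f i = ∑ i ∈ Finset.univ.erase j₀, f i + f j₀ :=
    fun f => (Finset.add_sum_erase _ f (Finset.mem_univ j₀)).symm.trans (add_comm _ _)
  rw [hsplit (fun i => hA.eigenvalues i * d i ^ 2), hsplit (fun i => d i ^ 2)]
  simp only [heig0, zero_mul, add_zero]
  have hle : ∑ i ∈ Finset.univ.erase j₀, lam2 * d i ^ 2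
      ≤ ∑ i ∈ Finset.univ.erase j₀, hA.eigenvalues i * d i ^ 2 := by
    apply Finset.sum_le_sum
    intro i hi
    exact mul_le_mul_of_nonneg_right (hge i (Finset.ne_of_mem_erase hi)) (sq_nonneg _)
  calc lam2 * (∑ i ∈ Finset.univ.erase j₀, d i ^ 2 + d j₀ ^ 2 - d j₀ ^ 2)
      = ∑ i ∈ Finset.univ.erase j₀, lam2 * d i ^ 2 := by
        rw [add_sub_cancel_right, Finset.mul_sum]
    _ ≤ _ := hle

lemma specNorm_quad_bound {n : ℕ} (M : Matrix (Fin n) (Fin n) ℝ) (x : Fin n → ℝ) :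
    |x ⬝ᵥ M.mulVec x| ≤ specNorm M * (x ⬝ᵥ x) := by
  set T := LinearMap.toContinuousLinearMap (Matrix.toEuclideanLin M) with hT
  set x' : EuclideanSpace ℝ (Fin n) := WithLp.toLp 2 x with hx'
  have h1 : x ⬝ᵥ M.mulVec x = (inner ℝ x' (T x') : ℝ) := by
    rw [euclid_dot]
    rfl
  have h2 : x ⬝ᵥ x = ‖x'‖ ^ 2 := by
    rw [← real_inner_self_eq_norm_sq, euclid_dot]
  rw [h1, h2]
  calc |(inner ℝ x' (T x') : ℝ)| ≤ ‖x'‖ * ‖T x'‖ := abs_real_inner_le_norm _ _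
    _ ≤ ‖x'‖ * (‖T‖ * ‖x'‖) :=
        mul_le_mul_of_nonneg_left (T.le_opNorm x') (norm_nonneg _)
    _ = specNorm M * ‖x'‖ ^ 2 := by rw [specNorm]; ring

lemma dot_self_pos {n : ℕ} {x : Fin n → ℝ} (hx : x ≠ 0) : 0 < x ⬝ᵥ x := by
  rcases lt_or_eq_of_le (Finset.sum_nonneg fun i _ => mul_self_nonneg (x i) :
      (0:ℝ) ≤ x ⬝ᵥ x) with h | h
  · exact h
  · exact absurd (dotProduct_self_eq_zero.mp h.symm) hx

set_option maxHeartbeats 1600000 in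
/-- Perturbation bound for the minimum-eigenvalue eigenvector: if λ_min(A)=0, λ₂(A)>0,
B ⪰ 0, A x₀ = 0, B x₀ ≠ 0, and xm minimizes f(x) = xᵀ(A+Ã)x / xᵀBx over {x : xᵀBx > 0},
then sin²∠(xm,x₀) ≤ (‖Ã‖/λ₂(A)) (1 + (‖x₀‖²/x₀ᵀBx₀)(xmᵀBxm/‖xm‖²)). -/
theorem eigenvector_perturbation_univariate {n : ℕ} (hn : 2 ≤ n)
    (A B At : Matrix (Fin n) (Fin n) ℝ)
    (hA : A.IsHermitian) (hAt : At.IsHermitian) (hB : B.PosSemidef)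
    (hmin : sortedEig hA ⟨0, by omega⟩ = 0)
    (hpos : 0 < sortedEig hA ⟨1, by omega⟩)
    (x₀ : Fin n → ℝ) (hx₀A : A.mulVec x₀ = 0) (hx₀B : B.mulVec x₀ ≠ 0)
    (xm : Fin n → ℝ) (hxm : 0 < xm ⬝ᵥ B.mulVec xm)
    (hminim : ∀ x : Fin n → ℝ, 0 < x ⬝ᵥ B.mulVec x →
      (xm ⬝ᵥ (A + At).mulVec xm) / (xm ⬝ᵥ B.mulVec xm) ≤
        (x ⬝ᵥ (A + At).mulVec x) / (x ⬝ᵥ B.mulVec x)) :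
    1 - (xm ⬝ᵥ x₀) ^ 2 / ((xm ⬝ᵥ xm) * (x₀ ⬝ᵥ x₀)) ≤
      (specNorm At / sortedEig hA ⟨1, by omega⟩) *
        (1 + ((x₀ ⬝ᵥ x₀) / (x₀ ⬝ᵥ B.mulVec x₀)) * ((xm ⬝ᵥ B.mulVec xm) / (xm ⬝ᵥ xm))) := by
  set L := sortedEig hA ⟨1, by omega⟩ with hL
  -- basic positivity
  have hx₀ne : x₀ ≠ 0 := by
    intro h; apply hx₀B; rw [h, Matrix.mulVec_zero]
  have hxmne : xm ≠ 0 := by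
    intro h; rw [h] at hxm; simp at hxm
  have hq : 0 < x₀ ⬝ᵥ x₀ := dot_self_pos hx₀ne
  have hp : 0 < xm ⬝ᵥ xm := dot_self_pos hxmne
  have hr : 0 < x₀ ⬝ᵥ B.mulVec x₀ := by
    have hnn : 0 ≤ x₀ ⬝ᵥ B.mulVec x₀ := by
      have := hB.dotProduct_mulVec_nonneg x₀
      simpa using this
    rcases lt_or_eq_of_le hnn with h | h
    · exact h
    · exfalso
      apply hx₀B
      have := (hB.dotProduct_mulVec_zero_iff x₀).mp (by simpa using h.symm)
      exact this
  have hs : 0 < xm ⬝ᵥ B.mulVec xm := hxm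
  have hNpos : 0 ≤ specNorm At := norm_nonneg _
  -- bound via minimality at x₀
  have hx₀num : x₀ ⬝ᵥ (A + At).mulVec x₀ = x₀ ⬝ᵥ At.mulVec x₀ := by
    rw [Matrix.add_mulVec, hx₀A, zero_add]
  have hmin₀ := hminim x₀ hr
  rw [hx₀num] at hmin₀
  have hAtx₀ : x₀ ⬝ᵥ At.mulVec x₀ ≤ specNorm At * (x₀ ⬝ᵥ x₀) :=
    (le_abs_self _).trans (specNorm_quad_bound At x₀)
  have hAtxm : -(xm ⬝ᵥ At.mulVec xm) ≤ specNorm At * (xm ⬝ᵥ xm) :=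
    (neg_le_abs _).trans (specNorm_quad_bound At xm)
  -- clear denominators in hmin₀
  have hkey1 : (xm ⬝ᵥ (A + At).mulVec xm) * (x₀ ⬝ᵥ B.mulVec x₀)
      ≤ (x₀ ⬝ᵥ At.mulVec x₀) * (xm ⬝ᵥ B.mulVec xm) := by
    rw [div_le_div_iff₀ hs hr] at hmin₀
    exact hmin₀
  have hxmnum : xm ⬝ᵥ (A + At).mulVec xm
      = xm ⬝ᵥ A.mulVec xm + xm ⬝ᵥ At.mulVec xm := by
    rw [Matrix.add_mulVec, dotProduct_add]
  -- gap lemma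
  have hgap := gap_lemma hn A hA hmin hpos x₀ hx₀ne hx₀A xm
  rw [← hL] at hgap
  -- clear denominators in hgap (multiply by q)
  have hgap2 : L * ((xm ⬝ᵥ xm) * (x₀ ⬝ᵥ x₀) - (xm ⬝ᵥ x₀) ^ 2)
      ≤ (xm ⬝ᵥ A.mulVec xm) * (x₀ ⬝ᵥ x₀) := by
    have := mul_le_mul_of_nonneg_right hgap hq.le
    calc L * ((xm ⬝ᵥ xm) * (x₀ ⬝ᵥ x₀) - (xm ⬝ᵥ x₀) ^ 2)
        = L * (xm ⬝ᵥ xm - (xm ⬝ᵥ x₀) ^ 2 / (x₀ ⬝ᵥ x₀)) * (x₀ ⬝ᵥ x₀) := by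
          field_simp
      _ ≤ (xm ⬝ᵥ A.mulVec xm) * (x₀ ⬝ᵥ x₀) := this
  -- combine: bound xmᵀ A xm
  have hAxm : (xm ⬝ᵥ A.mulVec xm) * (x₀ ⬝ᵥ B.mulVec x₀)
      ≤ specNorm At * (x₀ ⬝ᵥ x₀) * (xm ⬝ᵥ B.mulVec xm)
        + specNorm At * (xm ⬝ᵥ xm) * (x₀ ⬝ᵥ B.mulVec x₀) := by
    nlinarith [hkey1, hxmnum, hAtx₀, hAtxm, hr, hs, mul_le_mul_of_nonneg_right hAtx₀ hs.le]
  -- final algebra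
  have hrw : 1 - (xm ⬝ᵥ x₀) ^ 2 / ((xm ⬝ᵥ xm) * (x₀ ⬝ᵥ x₀))
      = ((xm ⬝ᵥ xm) * (x₀ ⬝ᵥ x₀) - (xm ⬝ᵥ x₀) ^ 2) / ((xm ⬝ᵥ xm) * (x₀ ⬝ᵥ x₀)) := by
    field_simp
  rw [div_mul_eq_mul_div, le_div_iff₀ hpos, hrw, div_mul_eq_mul_div,
    div_le_iff₀ (mul_pos hp hq)]
  -- now all denominators are r and p inside RHS; clear them
  have hfinal : ((xm ⬝ᵥ xm) * (x₀ ⬝ᵥ x₀) - (xm ⬝ᵥ x₀) ^ 2) * L * ((x₀ ⬝ᵥ B.mulVec x₀) * (xm ⬝ᵥ xm))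
      ≤ specNorm At *
          (1 + (x₀ ⬝ᵥ x₀) / (x₀ ⬝ᵥ B.mulVec x₀) * ((xm ⬝ᵥ B.mulVec xm) / (xm ⬝ᵥ xm)))
          * ((xm ⬝ᵥ xm) * (x₀ ⬝ᵥ x₀)) * ((x₀ ⬝ᵥ B.mulVec x₀) * (xm ⬝ᵥ xm)) := by
    have expand : specNorm At *
          (1 + (x₀ ⬝ᵥ x₀) / (x₀ ⬝ᵥ B.mulVec x₀) * ((xm ⬝ᵥ B.mulVec xm) / (xm ⬝ᵥ xm)))
          * ((xm ⬝ᵥ xm) * (x₀ ⬝ᵥ x₀)) * ((x₀ ⬝ᵥ B.mulVec x₀) * (xm ⬝ᵥ xm))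
        = (specNorm At * (xm ⬝ᵥ xm) * (x₀ ⬝ᵥ B.mulVec x₀)
            + specNorm At * (x₀ ⬝ᵥ x₀) * (xm ⬝ᵥ B.mulVec xm))
          * ((xm ⬝ᵥ xm) * (x₀ ⬝ᵥ x₀)) := by
      field_simp
    rw [expand]
    have step : L * ((xm ⬝ᵥ xm) * (x₀ ⬝ᵥ x₀) - (xm ⬝ᵥ x₀) ^ 2) * (x₀ ⬝ᵥ B.mulVec x₀)
        ≤ (specNorm At * (xm ⬝ᵥ xm) * (x₀ ⬝ᵥ B.mulVec x₀)
            + specNorm At * (x₀ ⬝ᵥ x₀) * (xm ⬝ᵥ B.mulVec xm)) * (x₀ ⬝ᵥ x₀) := by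
      nlinarith [mul_le_mul_of_nonneg_right hgap2 hr.le, hAxm, hq, hr]
    nlinarith [mul_le_mul_of_nonneg_right step hp.le, hp, hq, hr]
  calc ((xm ⬝ᵥ xm) * (x₀ ⬝ᵥ x₀) - (xm ⬝ᵥ x₀) ^ 2) * L
      ≤ specNorm At *
          (1 + (x₀ ⬝ᵥ x₀) / (x₀ ⬝ᵥ B.mulVec x₀) * ((xm ⬝ᵥ B.mulVec xm) / (xm ⬝ᵥ xm)))
          * ((xm ⬝ᵥ xm) * (x₀ ⬝ᵥ x₀)) := by
        have hden : 0 < (x₀ ⬝ᵥ B.mulVec x₀) * (xm ⬝ᵥ xm) := mul_pos hr hp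
        have := (mul_le_mul_iff_of_pos_right hden).mp (by
          calc ((xm ⬝ᵥ xm) * (x₀ ⬝ᵥ x₀) - (xm ⬝ᵥ x₀) ^ 2) * L * ((x₀ ⬝ᵥ B.mulVec x₀) * (xm ⬝ᵥ xm))
              ≤ _ := hfinal)
        exact this
    _ = _ := by ring
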